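/- If random variables T_0, T_1, ..., T_B are exchangeable, then the p-value p = (1/(B+1)) * (1 + #{b in {1,...,B} : T_b >= T_0}) satisfies P(p <= alpha) <= alpha for all alpha in [0,1]. -/
import Mathlib


open MeasureTheory ProbabilityTheory Filter Finset
open scoped ENNReal

/-- Combinatorial key lemma: the number of indices `i` whose "rank count"
`#{b : t i ≤ t b}` is at most `k` is itself at most `k`. -/
lemma card_rank_le {n k : ℕ} (t : Fin n → ℝ) :
    ((Finset.univ : Finset (Fin n)).filter
      (fun i => ((Finset.univ.filter (fun b => t i ≤ t b)).card ≤ k))).card ≤ k := by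
  by_contra h
  push_neg at h
  set S := (Finset.univ : Finset (Fin n)).filter
      (fun i => ((Finset.univ.filter (fun b => t i ≤ t b)).card ≤ k)) with hS
  have hSne : S.Nonempty := Finset.card_pos.mp (lt_of_le_of_lt (Nat.zero_le _) h)
  obtain ⟨i, hiS, hmin⟩ := S.exists_min_image t hSne
  have hsub : S ⊆ Finset.univ.filter (fun b => t i ≤ t b) := by
    intro b hb
    exact Finset.mem_filter.mpr ⟨Finset.mem_univ _, hmin b hb⟩
  have h1 := Finset.card_le_card hsub
  have h2 : (Finset.univ.filter (fun b => t i ≤ t b)).card ≤ k :=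
    (Finset.mem_filter.mp hiS).2
  omega

lemma card_filter_perm {n : ℕ} (σ : Equiv.Perm (Fin n)) (P : Fin n → Prop) [DecidablePred P] :
    ((Finset.univ : Finset (Fin n)).filter (fun b => P (σ b))).card
      = (Finset.univ.filter P).card := by
  have himg : (Finset.univ.filter (fun b => P (σ b)))
      = (Finset.univ.filter P).image σ.symm := by
    ext b
    simp only [Finset.mem_filter, Finset.mem_univ, true_and, Finset.mem_image]
    constructor
    · intro h; exact ⟨σ b, h, by simp⟩
    · rintro ⟨c, hc, rfl⟩; simpa using hc
  rw [himg, Finset.card_image_of_injective _ σ.symm.injective]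

/-- If `T_0, T_1, ..., T_B` are exchangeable, then the randomization p-value
`p = (1/(B+1)) (1 + #{b ∈ {1,…,B} : T_b ≥ T_0})` satisfies `P(p ≤ α) ≤ α` for all `α ∈ [0,1]`. -/
theorem exchangeable_pvalue_valid
    {Ω : Type*} [MeasurableSpace Ω] (μ : Measure Ω) [IsProbabilityMeasure μ]
    (B : ℕ) (T : Fin (B + 1) → Ω → ℝ) (hT : ∀ i, Measurable (T i))
    (hexch : ∀ σ : Equiv.Perm (Fin (B + 1)),
      μ.map (fun ω (i : Fin (B + 1)) => T (σ i) ω) =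
        μ.map (fun ω (i : Fin (B + 1)) => T i ω))
    (α : ℝ) (hα : α ∈ Set.Icc (0 : ℝ) 1) :
    (μ {ω | (1 + (((Finset.univ : Finset (Fin (B + 1))).filter
          (fun b => b ≠ 0 ∧ T 0 ω ≤ T b ω)).card : ℝ)) / (B + 1) ≤ α}).toReal ≤ α := by
  classical
  obtain ⟨hα0, hα1⟩ := hα
  have hn : (0:ℝ) < (B:ℝ) + 1 := by positivity
  set k := Nat.floor (α * ((B:ℝ) + 1)) with hk
  -- the events
  set A : Fin (B+1) → Set Ω := fun i =>
    {ω | ((Finset.univ.filter (fun b => T i ω ≤ T b ω)).card ≤ k)} with hA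
  -- the statement set equals A 0
  have hset : {ω | (1 + (((Finset.univ : Finset (Fin (B + 1))).filter
        (fun b => b ≠ 0 ∧ T 0 ω ≤ T b ω)).card : ℝ)) / (B + 1) ≤ α} = A 0 := by
    ext ω
    simp only [Set.mem_setOf_eq, hA]
    have hcard : (Finset.univ.filter (fun b => T 0 ω ≤ T b ω)).card
        = 1 + (Finset.univ.filter (fun b : Fin (B+1) => b ≠ 0 ∧ T 0 ω ≤ T b ω)).card := by
      have hins : (Finset.univ.filter (fun b : Fin (B+1) => T 0 ω ≤ T b ω))
          = insert 0 (Finset.univ.filter (fun b : Fin (B+1) => b ≠ 0 ∧ T 0 ω ≤ T b ω)) := by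
        ext b
        by_cases hb : b = 0 <;> simp [hb]
      rw [hins, Finset.card_insert_of_notMem (by simp)]
      omega
    rw [div_le_iff₀ hn, hcard]
    constructor
    · intro h
      apply Nat.le_floor
      push_cast
      linarith
    · intro h
      have := (Nat.le_floor_iff (mul_nonneg hα0 (by positivity))).mp h
      push_cast at this
      linarith
  -- measurability
  have hTvec : Measurable (fun ω (i : Fin (B+1)) => T i ω) := measurable_pi_lambda _ hT
  have hcardmeas : ∀ i : Fin (B+1), Measurable
      (fun t : Fin (B+1) → ℝ => (Finset.univ.filter (fun b => t i ≤ t b)).card) := by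
    intro i
    have heq : (fun t : Fin (B+1) → ℝ => (Finset.univ.filter (fun b => t i ≤ t b)).card)
        = fun t => ∑ b : Fin (B+1), if t i ≤ t b then 1 else 0 := by
      funext t
      rw [Finset.sum_boole, Nat.cast_id]
    rw [heq]
    exact Finset.measurable_sum _ (fun b _ =>
      Measurable.ite (measurableSet_le (measurable_pi_apply i) (measurable_pi_apply b))
        measurable_const measurable_const)
  have hSmeas : ∀ i : Fin (B+1), MeasurableSet
      {t : Fin (B+1) → ℝ | (Finset.univ.filter (fun b => t i ≤ t b)).card ≤ k} :=
    fun i => (hcardmeas i) measurableSet_Iic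
  have hAmeas : ∀ i, MeasurableSet (A i) := fun i => hTvec (hSmeas i)
  -- equal measures by exchangeability
  have hmeq : ∀ i, μ (A i) = μ (A 0) := by
    intro i
    set σ := Equiv.swap (0 : Fin (B+1)) i with hσ
    have hσT : Measurable (fun ω (j : Fin (B+1)) => T (σ j) ω) :=
      measurable_pi_lambda _ (fun j => hT (σ j))
    have hpre : A i = (fun ω (j : Fin (B+1)) => T (σ j) ω) ⁻¹'
        {t : Fin (B+1) → ℝ | (Finset.univ.filter (fun b => t 0 ≤ t b)).card ≤ k} := by
      ext ω
      simp only [Set.mem_preimage, Set.mem_setOf_eq, hA]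
      have h0 : σ 0 = i := Equiv.swap_apply_left 0 i
      rw [card_filter_perm σ (fun c => T (σ 0) ω ≤ T c ω)]
      simp only [h0]
    have hmap : μ ((fun ω (j : Fin (B+1)) => T (σ j) ω) ⁻¹'
        {t : Fin (B+1) → ℝ | (Finset.univ.filter (fun b => t 0 ≤ t b)).card ≤ k})
        = μ ((fun ω (j : Fin (B+1)) => T j ω) ⁻¹'
        {t : Fin (B+1) → ℝ | (Finset.univ.filter (fun b => t 0 ≤ t b)).card ≤ k}) := by
      rw [← Measure.map_apply hσT (hSmeas 0), hexch σ, Measure.map_apply hTvec (hSmeas 0)]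
    rw [hpre, hmap]
    rfl
  -- sum bound
  have hsum : ∑ i : Fin (B+1), μ (A i) ≤ (k : ℝ≥0∞) := by
    calc ∑ i : Fin (B+1), μ (A i)
        = ∑ i : Fin (B+1), ∫⁻ ω, (A i).indicator (fun _ => (1:ℝ≥0∞)) ω ∂μ :=
          Finset.sum_congr rfl (fun i _ => (lintegral_indicator_one (hAmeas i)).symm)
      _ = ∫⁻ ω, ∑ i : Fin (B+1), (A i).indicator (fun _ => (1:ℝ≥0∞)) ω ∂μ :=
          (lintegral_finset_sum _ (fun i _ => measurable_const.indicator (hAmeas i))).symm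
      _ ≤ ∫⁻ _ω, (k : ℝ≥0∞) ∂μ := by
          apply lintegral_mono
          intro ω
          have heq : ∑ i : Fin (B+1), (A i).indicator (fun _ => (1:ℝ≥0∞)) ω
              = ((Finset.univ.filter (fun i : Fin (B+1) => ω ∈ A i)).card : ℝ≥0∞) := by
            simp only [Set.indicator_apply]
            rw [Finset.sum_boole]
          show ∑ i : Fin (B + 1), (A i).indicator (fun _ => (1:ℝ≥0∞)) ω ≤ (k : ℝ≥0∞)
          rw [heq]
          have hle : (Finset.univ.filter (fun i : Fin (B+1) => ω ∈ A i)).card ≤ k :=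
            card_rank_le (fun j => T j ω)
          exact_mod_cast hle
      _ = (k : ℝ≥0∞) := by simp
  have hBsum : ((B:ℝ≥0∞)+1) * μ (A 0) = ∑ i : Fin (B+1), μ (A i) := by
    simp only [hmeq]
    rw [Finset.sum_const, Finset.card_univ, Fintype.card_fin, nsmul_eq_mul]
    push_cast
    ring
  have hkle : (k : ℝ≥0∞) ≤ ENNReal.ofReal α * ((B:ℝ≥0∞)+1) := by
    have h1 : (k:ℝ) ≤ α * ((B:ℝ)+1) := Nat.floor_le (mul_nonneg hα0 (by positivity))
    calc (k:ℝ≥0∞) = ENNReal.ofReal (k:ℝ) := (ENNReal.ofReal_natCast k).symm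
      _ ≤ ENNReal.ofReal (α * ((B:ℝ)+1)) := ENNReal.ofReal_le_ofReal h1
      _ = ENNReal.ofReal α * ENNReal.ofReal ((B:ℝ)+1) := ENNReal.ofReal_mul hα0
      _ = ENNReal.ofReal α * ((B:ℝ≥0∞)+1) := by
          have : ((B:ℝ)+1) = ((B+1:ℕ):ℝ) := by push_cast; ring
          rw [this, ENNReal.ofReal_natCast]
          push_cast
          ring
  have hfin : μ (A 0) ≤ ENNReal.ofReal α := by
    have h2 : μ (A 0) * ((B:ℝ≥0∞)+1) ≤ ENNReal.ofReal α * ((B:ℝ≥0∞)+1) := by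
      rw [mul_comm, hBsum]
      exact le_trans hsum hkle
    have hc0 : ((B:ℝ≥0∞)+1) ≠ 0 := by simp
    have hct : ((B:ℝ≥0∞)+1) ≠ ⊤ := by
      simp [ENNReal.add_ne_top, ENNReal.natCast_ne_top]
    exact (ENNReal.mul_le_mul_iff_left hc0 hct).mp h2
  rw [hset]
  exact ENNReal.toReal_le_of_le_ofReal hα0 hfin
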